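/- Let f : ℝ² → ℝ be a nonzero homogeneous polynomial of degree d ≥ 1. Then the Łojasiewicz gradient exponent of f at the origin equals 1 - 1/d. -/

import Mathlib

noncomputable def LGE {𝕜 : Type*} [RCLike 𝕜] {E : Type*} [NormedAddCommGroup E]
    [NormedSpace 𝕜 E] (f : E → 𝕜) : ℝ :=
  sInf {l : ℝ | 0 < l ∧ ∃ c > (0:ℝ), ∃ ε > (0:ℝ), ∀ z : E, ‖z‖ < ε →
    c * ‖f z‖ ^ l ≤ ‖fderiv 𝕜 f z‖}

open Polynomial Set Filter Topology

local notation "E2" => EuclideanSpace ℝ (Fin 2)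

namespace Stmt11

noncomputable def F (f : MvPolynomial (Fin 2) ℝ) : E2 → ℝ :=
  fun z => MvPolynomial.eval (fun i => z i) f

lemma contDiffF (f : MvPolynomial (Fin 2) ℝ) : ContDiff ℝ 1 (F f) := by
  unfold F
  induction f using MvPolynomial.induction_on with
  | C a => simpa using contDiff_const
  | add p q hp hq => simpa [map_add] using hp.add hq
  | mul_X p i hp =>
      simpa [map_mul] using hp.mul (PiLp.proj 2 (fun _ : Fin 2 => ℝ) i).contDiff

lemma diffF (f : MvPolynomial (Fin 2) ℝ) : Differentiable ℝ (F f) :=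
  (contDiffF f).differentiable one_ne_zero

lemma eval_smul {f : MvPolynomial (Fin 2) ℝ} {d : ℕ} (hhom : f.IsHomogeneous d)
    (t : ℝ) (x : Fin 2 → ℝ) :
    MvPolynomial.eval (fun i => t * x i) f = t ^ d * MvPolynomial.eval x f := by
  rw [MvPolynomial.eval_eq', MvPolynomial.eval_eq', Finset.mul_sum]
  apply Finset.sum_congr rfl
  intro m hm
  have hdeg : ∑ i, m i = d := by
    have := hhom (MvPolynomial.mem_support_iff.mp hm)
    rw [← this]
    simp [Finsupp.weight_apply, Finsupp.sum_fintype]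
  rw [← hdeg]
  rw [Finset.prod_congr rfl (fun i _ => mul_pow (t) (x i) (m i)), Finset.prod_mul_distrib,
    Finset.prod_pow_eq_pow_sum]
  ring

lemma F_smul {f : MvPolynomial (Fin 2) ℝ} {d : ℕ} (hhom : f.IsHomogeneous d)
    (t : ℝ) (z : E2) : F f (t • z) = t ^ d * F f z := by
  have : (fun i => (t • z) i) = fun i => t * z i := rfl
  rw [F, this, eval_smul hhom]
  rfl

variable {f : MvPolynomial (Fin 2) ℝ} {d : ℕ}

lemma F_def (f : MvPolynomial (Fin 2) ℝ) (z : E2) :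
    F f z = MvPolynomial.eval (fun i => z i) f := rfl

lemma fderiv_smul (hhom : f.IsHomogeneous d) (hd : 1 ≤ d) {t : ℝ} (ht : t ≠ 0) (z : E2) :
    fderiv ℝ (F f) (t • z) = t ^ (d - 1) • fderiv ℝ (F f) z := by
  have hcoe : ⇑(t • (ContinuousLinearMap.id ℝ E2)) = fun w : E2 => t • w := by
    funext w; simp
  have hin : fderiv ℝ (fun w : E2 => t • w) z = t • (ContinuousLinearMap.id ℝ E2) := by
    rw [← hcoe]; exact (t • (ContinuousLinearMap.id ℝ E2)).fderiv
  have h1 : fderiv ℝ (fun w => F f (t • w)) z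
      = (fderiv ℝ (F f) (t • z)).comp (t • (ContinuousLinearMap.id ℝ E2)) := by
    have hdin : DifferentiableAt ℝ (fun w : E2 => t • w) z := by
      rw [← hcoe]; exact (t • (ContinuousLinearMap.id ℝ E2)).differentiableAt
    have := fderiv_comp (𝕜 := ℝ) z ((diffF f).differentiableAt (x := t • z)) hdin
    rw [Function.comp_def] at this
    rw [this, hin]
  have h2 : fderiv ℝ (fun w => F f (t • w)) z = t ^ d • fderiv ℝ (F f) z := by
    have : (fun w => F f (t • w)) = fun w => t ^ d * F f w := by
      funext w; exact F_smul hhom t w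
    rw [this, fderiv_const_mul ((diffF f).differentiableAt)]
  have h3 : (fderiv ℝ (F f) (t • z)).comp (t • (ContinuousLinearMap.id ℝ E2))
      = t • fderiv ℝ (F f) (t • z) := by
    ext v
    simp [mul_comm]
  rw [h3] at h1
  have h4 : t • fderiv ℝ (F f) (t • z) = t • (t ^ (d-1) • fderiv ℝ (F f) z) := by
    rw [← h1, h2, smul_smul, ← pow_succ']
    congr 2
    omega
  exact smul_right_injective _ ht h4

lemma euler (hhom : f.IsHomogeneous d) (z : E2) :
    fderiv ℝ (F f) z z = d * F f z := by
  have hc : HasDerivAt (fun t : ℝ => t • z) ((1:ℝ) • z) 1 := (hasDerivAt_id 1).smul_const z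
  have h1 : HasDerivAt (fun t : ℝ => F f (t • z)) (fderiv ℝ (F f) z ((1:ℝ) • z)) 1 := by
    have := ((diffF f).differentiableAt (x := (1:ℝ) • z)).hasFDerivAt.comp_hasDerivAt 1 hc
    simpa [one_smul, Function.comp_def] using this
  have h2 : HasDerivAt (fun t : ℝ => t ^ d * F f z) ((d * 1 ^ (d-1)) * F f z) 1 := by
    simpa using (hasDerivAt_pow d (1:ℝ)).mul_const (F f z)
  have heq : (fun t : ℝ => F f (t • z)) = fun t : ℝ => t ^ d * F f z := by
    funext t; exact F_smul hhom t z
  rw [heq] at h1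
  have := h1.unique h2
  simpa using this

lemma rpow_le_rpow_exp {x e e' : ℝ} (hx0 : 0 ≤ x) (hx1 : x ≤ 1) (h0 : 0 ≤ e') (h : e' ≤ e) :
    x ^ e ≤ x ^ e' := by
  rcases hx0.eq_or_lt with hx | hx
  · rcases h0.eq_or_lt with he' | he'
    · rw [← he', Real.rpow_zero]
      exact Real.rpow_le_one hx0 hx1 (le_trans h0 h)
    · rw [← hx, Real.zero_rpow (ne_of_gt (lt_of_lt_of_le he' h)),
        Real.zero_rpow (ne_of_gt he')]
  · exact Real.rpow_le_rpow_of_exponent_ge hx hx1 h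

lemma key_local (d : ℕ) (hd : 1 ≤ d) (p : ℝ[X]) (hp : p ≠ 0) (hdeg : p.natDegree ≤ d)
    (t₀ : ℝ) :
    ∃ c > 0, ∃ U ∈ 𝓝 t₀, ∀ t ∈ U,
      c * |p.eval t| ^ (1 - 1/(d:ℝ)) ≤ max |p.eval t| |p.derivative.eval t| := by
  have hα0 : (0:ℝ) ≤ 1 - 1/(d:ℝ) := by
    have : (1:ℝ) ≤ (d:ℝ) := by exact_mod_cast hd
    have : 1/(d:ℝ) ≤ 1 := by
      rw [div_le_one (by linarith)]; linarith
    linarith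
  by_cases hroot : p.eval t₀ = 0
  · -- root case
    set m := p.rootMultiplicity t₀ with hm
    have hm1 : 1 ≤ m := (Polynomial.rootMultiplicity_pos hp).mpr hroot
    have hmd : m ≤ d := by
      have hdvd : (X - C t₀) ^ m ∣ p := Polynomial.pow_rootMultiplicity_dvd p t₀
      have := Polynomial.natDegree_le_of_dvd hdvd hp
      rw [Polynomial.natDegree_pow, Polynomial.natDegree_X_sub_C, mul_one] at this
      omega
    set q := p /ₘ (X - C t₀) ^ m with hq
    have hfac : (X - C t₀) ^ m * q = p := Polynomial.pow_mul_divByMonic_rootMultiplicity_eq p t₀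
    have hq0 : q.eval t₀ ≠ 0 := Polynomial.eval_divByMonic_pow_rootMultiplicity_ne_zero t₀ hp
    set b := |q.eval t₀| with hb
    have hb0 : 0 < b := abs_pos.mpr hq0
    set B := |(derivative q).eval t₀| + 1 with hB
    have hB0 : 0 < B := by positivity
    have hcq : Continuous fun t => |q.eval t| := (Polynomial.continuous q).abs
    have hcq' : Continuous fun t => |(derivative q).eval t| :=
      (Polynomial.continuous (derivative q)).abs
    set W : Set ℝ := {t | b/2 < |q.eval t| ∧ |q.eval t| < 2*b ∧ |(derivative q).eval t| < B}
      with hW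
    have hWopen : IsOpen W := by
      apply IsOpen.inter (isOpen_lt continuous_const hcq)
      exact IsOpen.inter (isOpen_lt hcq continuous_const) (isOpen_lt hcq' continuous_const)
    have ht₀W : t₀ ∈ W := by
      refine ⟨by linarith, by linarith, by rw [hB]; linarith⟩
    set rr := min 1 (min ((m*b)/(4*B)) (1/(2*b))) with hrr
    have hrr0 : 0 < rr := by
      apply lt_min one_pos
      apply lt_min (by positivity) (by positivity)
    set U := W ∩ Metric.ball t₀ rr with hU
    refine ⟨(m*b/4) / max 1 (2*b), by positivity, U,
      Filter.inter_mem (hWopen.mem_nhds ht₀W) (Metric.ball_mem_nhds t₀ hrr0), ?_⟩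
    rintro t ⟨⟨hq1, hq2, hq3⟩, htball⟩
    set s := t - t₀ with hs
    have hsr : |s| < rr := by
      rw [Real.ball_eq_Ioo] at htball
      rw [abs_lt]; constructor <;> [linarith [htball.1]; linarith [htball.2]]
    -- evaluations
    have hpt : p.eval t = s^m * q.eval t := by
      rw [← hfac]; simp [hs]
    have hp't : p.derivative.eval t = m * s^(m-1) * q.eval t + s^m * (derivative q).eval t := by
      rw [← hfac, Polynomial.derivative_mul, Polynomial.derivative_X_sub_C_pow]
      simp [hs]
      try ring
    have habs_pt : |p.eval t| = |s|^m * |q.eval t| := by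
      rw [hpt, abs_mul, abs_pow]
    -- lower bound on |p'|
    have hlow : |s|^(m-1) * (m*b/4) ≤ |p.derivative.eval t| := by
      have h1 : |(m:ℝ) * s^(m-1) * q.eval t| = m * |s|^(m-1) * |q.eval t| := by
        rw [abs_mul, abs_mul, abs_pow, Nat.abs_cast]
      have h2 : |s^m * (derivative q).eval t| ≤ |s|^m * B := by
        rw [abs_mul, abs_pow]
        exact mul_le_mul_of_nonneg_left (le_of_lt hq3) (by positivity)
      have h3 : |s|^m * B ≤ |s|^(m-1) * (m*b/4) := by
        have : |s|^m = |s|^(m-1) * |s| := by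
          rw [← pow_succ]; congr 1; omega
        rw [this, mul_assoc]
        apply mul_le_mul_of_nonneg_left _ (by positivity)
        have h4 : |s| * B ≤ rr * B := mul_le_mul_of_nonneg_right (le_of_lt hsr) (le_of_lt hB0)
        have h5 : rr * B ≤ (m*b)/(4*B) * B := by
          apply mul_le_mul_of_nonneg_right _ (le_of_lt hB0)
          exact le_trans (min_le_right _ _) (min_le_left _ _)
        have h6 : (m*b)/(4*B) * B = m*b/4 := by field_simp
        calc |s| * B ≤ rr * B := h4
          _ ≤ m*b/4 := by rw [← h6]; exact h5
      have h7 : (m:ℝ) * |s|^(m-1) * |q.eval t| ≥ m * |s|^(m-1) * (b/2) := by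
        apply mul_le_mul_of_nonneg_left (le_of_lt hq1) (by positivity)
      calc |s|^(m-1) * (m*b/4)
          = m * |s|^(m-1) * (b/2) - |s|^(m-1) * (m*b/4) := by ring
        _ ≤ m * |s|^(m-1) * |q.eval t| - |s|^m * B := by
            have := h3; have := h7; linarith
        _ ≤ |(m:ℝ) * s^(m-1) * q.eval t| - |s^m * (derivative q).eval t| := by
            rw [h1]; linarith [h2]
        _ ≤ |p.derivative.eval t| := by
            rw [hp't]
            have := abs_add_le ((m:ℝ) * s^(m-1) * q.eval t + s^m * (derivative q).eval t)
              (-(s^m * (derivative q).eval t))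
            simp only [add_neg_cancel_right] at this
            rw [abs_neg] at this
            linarith
    -- |p t| ≤ 1
    have hpt1 : |p.eval t| ≤ 1 := by
      rw [habs_pt]
      have h1 : |s|^m ≤ rr := by
        calc |s|^m ≤ rr^m := pow_le_pow_left₀ (abs_nonneg s) (le_of_lt hsr) m
          _ ≤ rr := pow_le_of_le_one (le_of_lt hrr0) (min_le_left _ _) (by omega)
      have h2 : |s|^m * |q.eval t| ≤ rr * (2*b) :=
        mul_le_mul h1 (le_of_lt hq2) (abs_nonneg _) (le_of_lt hrr0)
      have h3 : rr * (2*b) ≤ 1 := by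
        have : rr ≤ 1/(2*b) := le_trans (min_le_right _ _) (min_le_right _ _)
        calc rr * (2*b) ≤ 1/(2*b) * (2*b) :=
              mul_le_mul_of_nonneg_right this (by positivity)
          _ = 1 := by field_simp
      linarith
    -- exponent comparison
    have hγα : 1 - 1/(m:ℝ) ≤ 1 - 1/(d:ℝ) := by
      have h1 : (0:ℝ) < m := by exact_mod_cast hm1
      have h2 : (m:ℝ) ≤ d := by exact_mod_cast hmd
      have := one_div_le_one_div_of_le h1 h2
      linarith
    have hγ0 : (0:ℝ) ≤ 1 - 1/(m:ℝ) := by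
      have h1 : (1:ℝ) ≤ m := by exact_mod_cast hm1
      have : 1/(m:ℝ) ≤ 1 := by rw [div_le_one (by linarith)]; linarith
      linarith
    have hexp : |p.eval t| ^ (1 - 1/(d:ℝ)) ≤ |p.eval t| ^ (1 - 1/(m:ℝ)) :=
      rpow_le_rpow_exp (abs_nonneg _) hpt1 hγ0 hγα
    -- bound |p t| ^ γ
    have hm0' : (m:ℝ) ≠ 0 := by positivity
    have hptγ : |p.eval t| ^ (1 - 1/(m:ℝ)) ≤ |s|^(m-1) * max 1 (2*b) := by
      rw [habs_pt, Real.mul_rpow (by positivity) (abs_nonneg _)]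
      have h1 : (|s|^m : ℝ) ^ (1 - 1/(m:ℝ)) = |s|^(m-1) := by
        rw [← Real.rpow_natCast |s| m, ← Real.rpow_mul (abs_nonneg s)]
        have : (m:ℝ) * (1 - 1/(m:ℝ)) = ((m-1 : ℕ) : ℝ) := by
          rw [Nat.cast_sub hm1]
          field_simp
          norm_num
        rw [this, Real.rpow_natCast]
      rw [h1]
      apply mul_le_mul_of_nonneg_left _ (by positivity)
      rcases le_total |q.eval t| 1 with hle | hle
      · exact le_trans (Real.rpow_le_one (abs_nonneg _) hle hγ0) (le_max_left _ _)
      · calc |q.eval t| ^ (1 - 1/(m:ℝ)) ≤ |q.eval t| ^ (1:ℝ) := by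
              apply Real.rpow_le_rpow_of_exponent_le hle
              have : 0 < 1/(m:ℝ) := by positivity
              linarith
          _ = |q.eval t| := Real.rpow_one _
          _ ≤ max 1 (2*b) := le_trans (le_of_lt hq2) (le_max_right _ _)
    have hmax0 : (0:ℝ) < max 1 (2*b) := lt_of_lt_of_le one_pos (le_max_left _ _)
    calc (m*b/4) / max 1 (2*b) * |p.eval t| ^ (1 - 1/(d:ℝ))
        ≤ (m*b/4) / max 1 (2*b) * (|s|^(m-1) * max 1 (2*b)) := by
          apply mul_le_mul_of_nonneg_left _ (by positivity)
          exact le_trans hexp hptγ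
      _ = |s|^(m-1) * (m*b/4) := by field_simp
      _ ≤ |p.derivative.eval t| := hlow
      _ ≤ max |p.eval t| |p.derivative.eval t| := le_max_right _ _
  · -- non-root case
    set δ := |p.eval t₀| / 2 with hδ
    have hδ0 : 0 < δ := by
      have : 0 < |p.eval t₀| := abs_pos.mpr hroot
      positivity
    refine ⟨δ ^ (1/(d:ℝ)), Real.rpow_pos_of_pos hδ0 _, {t | δ < |p.eval t|}, ?_, ?_⟩
    · apply IsOpen.mem_nhds (isOpen_lt continuous_const (Polynomial.continuous p).abs)
      simp only [Set.mem_setOf_eq, hδ]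
      have : 0 < |p.eval t₀| := abs_pos.mpr hroot
      linarith
    · intro t ht
      simp only [Set.mem_setOf_eq] at ht
      have hpt0 : 0 < |p.eval t| := lt_trans hδ0 ht
      calc δ ^ (1/(d:ℝ)) * |p.eval t| ^ (1 - 1/(d:ℝ))
          ≤ |p.eval t| ^ (1/(d:ℝ)) * |p.eval t| ^ (1 - 1/(d:ℝ)) := by
            apply mul_le_mul_of_nonneg_right
              (Real.rpow_le_rpow (le_of_lt hδ0) (le_of_lt ht) (by positivity))
              (Real.rpow_nonneg (abs_nonneg _) _)
        _ = |p.eval t| := by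
            rw [← Real.rpow_add hpt0]
            norm_num
        _ ≤ max |p.eval t| |p.derivative.eval t| := le_max_left _ _

lemma key (d : ℕ) (hd : 1 ≤ d) (p : ℝ[X]) (hp : p ≠ 0) (hdeg : p.natDegree ≤ d) :
    ∃ c > 0, ∀ t ∈ Set.Icc (-1:ℝ) 1,
      c * |p.eval t| ^ (1 - 1/(d:ℝ)) ≤ max |p.eval t| |p.derivative.eval t| := by
  have H : ∀ t₀ : ℝ, ∃ c, 0 < c ∧ ∃ U, U ∈ 𝓝 t₀ ∧ ∀ t ∈ U,
      c * |p.eval t| ^ (1 - 1/(d:ℝ)) ≤ max |p.eval t| |p.derivative.eval t| := by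
    intro t₀
    obtain ⟨c, hc, U, hU, hUP⟩ := key_local d hd p hp hdeg t₀
    exact ⟨c, hc, U, hU, hUP⟩
  choose c hc U hU hUP using H
  obtain ⟨s, -, hcov⟩ := isCompact_Icc.elim_nhds_subcover U (fun x _ => hU x)
  have h0 : (0:ℝ) ∈ Set.Icc (-1:ℝ) 1 := by norm_num
  obtain ⟨x₀, hx₀, -⟩ := Set.mem_iUnion₂.mp (hcov h0)
  have hne : s.Nonempty := ⟨x₀, hx₀⟩
  refine ⟨s.inf' hne c, ?_, ?_⟩
  · rw [gt_iff_lt, Finset.lt_inf'_iff]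
    exact fun b _ => hc b
  · intro t ht
    obtain ⟨x, hx, htx⟩ := Set.mem_iUnion₂.mp (hcov ht)
    calc s.inf' hne c * |p.eval t| ^ (1 - 1/(d:ℝ))
        ≤ c x * |p.eval t| ^ (1 - 1/(d:ℝ)) :=
          mul_le_mul_of_nonneg_right (Finset.inf'_le c hx)
            (Real.rpow_nonneg (abs_nonneg _) _)
      _ ≤ _ := hUP x t htx

noncomputable def cp (f : MvPolynomial (Fin 2) ℝ) (i : Fin 2) : Polynomial ℝ :=
  MvPolynomial.aeval (fun k => if k = i then (1 : Polynomial ℝ) else Polynomial.X) f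

lemma univ_eq {i j : Fin 2} (hij : i ≠ j) : (Finset.univ : Finset (Fin 2)) = {i, j} := by
  symm
  apply Finset.eq_univ_iff_forall.mpr
  intro k
  simp only [Finset.mem_insert, Finset.mem_singleton]
  omega

lemma degree_sum {m : Fin 2 →₀ ℕ} {f : MvPolynomial (Fin 2) ℝ} {d : ℕ}
    (hhom : f.IsHomogeneous d) (hm : m ∈ f.support) {i j : Fin 2} (hij : i ≠ j) :
    m i + m j = d := by
  have h1 := hhom (MvPolynomial.mem_support_iff.mp hm)
  have h2 : ∑ k, m k = d := by
    rw [← h1]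
    simp [Finsupp.weight_apply, Finsupp.sum_fintype]
  rw [univ_eq hij, Finset.sum_insert (by simp [hij]), Finset.sum_singleton] at h2
  exact h2

lemma cp_eval (f : MvPolynomial (Fin 2) ℝ) (i : Fin 2) (t : ℝ) :
    (cp f i).eval t = MvPolynomial.eval (fun k => if k = i then 1 else t) f := by
  have h := MvPolynomial.eval₂_comp_left (Polynomial.evalRingHom t) (algebraMap ℝ (Polynomial ℝ))
    (fun k => if k = i then (1:Polynomial ℝ) else Polynomial.X) f
  have hcomp : (Polynomial.evalRingHom t).comp (algebraMap ℝ (Polynomial ℝ)) = RingHom.id ℝ := by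
    ext x; simp
  have hfun : (⇑(Polynomial.evalRingHom t) ∘ fun k => if k = i then (1:Polynomial ℝ) else Polynomial.X)
      = fun k => if k = i then (1:ℝ) else t := by
    funext k
    by_cases hk : k = i <;> simp [hk]
  rw [hcomp, hfun, MvPolynomial.eval₂_id] at h
  rw [cp, MvPolynomial.aeval_def]
  exact h

lemma cp_natDegree {f : MvPolynomial (Fin 2) ℝ} {d : ℕ} (hhom : f.IsHomogeneous d)
    (i : Fin 2) : (cp f i).natDegree ≤ d := by
  rw [cp, MvPolynomial.aeval_def, MvPolynomial.eval₂_eq']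
  apply Polynomial.natDegree_sum_le_of_forall_le
  intro m hm
  apply le_trans (Polynomial.natDegree_mul_le)
  have h1 : (algebraMap ℝ (Polynomial ℝ) (MvPolynomial.coeff m f)).natDegree = 0 :=
    Polynomial.natDegree_C _
  rw [h1, zero_add]
  apply le_trans (Polynomial.natDegree_prod_le _ _)
  have h2 : ∀ k : Fin 2,
      ((if k = i then (1:Polynomial ℝ) else Polynomial.X) ^ m k).natDegree ≤ m k := by
    intro k
    by_cases h : k = i <;> simp [h]
  calc ∑ k, ((if k = i then (1:Polynomial ℝ) else Polynomial.X) ^ m k).natDegree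
      ≤ ∑ k, m k := Finset.sum_le_sum (fun k _ => h2 k)
    _ = d := by
        have h1 := hhom (MvPolynomial.mem_support_iff.mp hm)
        rw [← h1]
        simp [Finsupp.weight_apply, Finsupp.sum_fintype]

lemma cp_ne_zero {f : MvPolynomial (Fin 2) ℝ} {d : ℕ} (hf : f ≠ 0)
    (hhom : f.IsHomogeneous d) {i j : Fin 2} (hij : i ≠ j) : cp f i ≠ 0 := by
  obtain ⟨m₀, hm₀⟩ := MvPolynomial.exists_coeff_ne_zero hf
  have hm₀s : m₀ ∈ f.support := MvPolynomial.mem_support_iff.mpr hm₀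
  have hterm : ∀ m : Fin 2 →₀ ℕ,
      (∏ k, (if k = i then (1:Polynomial ℝ) else Polynomial.X) ^ m k) = Polynomial.X ^ m j := by
    intro m
    rw [univ_eq hij, Finset.prod_insert (by simp [hij]), Finset.prod_singleton]
    simp [hij.symm, if_neg]
  have hcoeff : (cp f i).coeff (m₀ j) ≠ 0 := by
    rw [cp, MvPolynomial.aeval_def, MvPolynomial.eval₂_eq']
    simp only [hterm]
    rw [Polynomial.finset_sum_coeff]
    have hsingle : ∀ m ∈ f.support, m ≠ m₀ →
        ((algebraMap ℝ (Polynomial ℝ)) (MvPolynomial.coeff m f) * Polynomial.X ^ m j).coeff (m₀ j)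
          = 0 := by
      intro m hm hne
      have hj : m j ≠ m₀ j := by
        intro hEq
        apply hne
        have hdm := degree_sum hhom hm hij
        have hdm₀ := degree_sum hhom hm₀s hij
        ext k
        have hk : k = i ∨ k = j := by omega
        rcases hk with rfl | rfl
        · omega
        · exact hEq
      rw [Polynomial.algebraMap_eq, Polynomial.coeff_C_mul, Polynomial.coeff_X_pow,
        if_neg (fun h => hj h.symm), mul_zero]
    rw [Finset.sum_eq_single m₀ hsingle (fun h => absurd hm₀s h)]
    rw [Polynomial.algebraMap_eq, Polynomial.coeff_C_mul, Polynomial.coeff_X_pow, if_pos rfl,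
      mul_one]
    exact hm₀
  intro h
  rw [h] at hcoeff
  simp at hcoeff

variable {f : MvPolynomial (Fin 2) ℝ} {d : ℕ}

lemma F_chart (hhom : f.IsHomogeneous d) {i j : Fin 2} (hij : i ≠ j) {z : E2}
    (hzi : z i ≠ 0) : F f z = (z i)^d * (cp f i).eval (z j / z i) := by
  rw [F_def, cp_eval]
  have hfun : (fun k => (z : Fin 2 → ℝ) k)
      = fun k => z i * (if k = i then 1 else z j / z i) := by
    funext k
    have hk : k = i ∨ k = j := by omega
    rcases hk with rfl | rfl
    · simp
    · rw [if_neg (by omega)]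
      field_simp
  rw [hfun, eval_smul hhom]

lemma fderiv_chart (hhom : f.IsHomogeneous d) (hd : 1 ≤ d) {i j : Fin 2} (hij : i ≠ j)
    {z : E2} (hzi : z i ≠ 0) :
    fderiv ℝ (F f) z (EuclideanSpace.single j 1)
      = (z i)^(d-1) * (cp f i).derivative.eval (z j / z i) := by
  set v : E2 := EuclideanSpace.single j 1 with hv
  have hcurve : HasDerivAt (fun s : ℝ => z + s • v) v 0 := by
    simpa using ((hasDerivAt_id (0:ℝ)).smul_const v).const_add z
  have h1 : HasDerivAt (fun s : ℝ => F f (z + s • v)) (fderiv ℝ (F f) z v) 0 := by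
    have := ((diffF f).differentiableAt (x := z + (0:ℝ) • v)).hasFDerivAt.comp_hasDerivAt 0 hcurve
    simpa [Function.comp_def] using this
  have hcoord : ∀ s : ℝ, ∀ k : Fin 2, (z + s • v) k = if k = j then z j + s else z k := by
    intro s k
    by_cases hk : k = j
    · subst hk
      simp [hv, PiLp.add_apply, PiLp.smul_apply, EuclideanSpace.single_apply]
    · simp [hv, PiLp.add_apply, PiLp.smul_apply, EuclideanSpace.single_apply, hk]
  have heq : (fun s : ℝ => F f (z + s • v))
      = fun s : ℝ => (z i)^d * (cp f i).eval ((z j + s) / z i) := by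
    funext s
    have hzi' : (z + s • v) i = z i := by rw [hcoord s i, if_neg (by omega)]
    have hzj' : (z + s • v) j = z j + s := by rw [hcoord s j, if_pos rfl]
    rw [F_chart hhom hij (z := z + s • v) (by rw [hzi']; exact hzi), hzi', hzj']
  have h2 : HasDerivAt (fun s : ℝ => (z i)^d * (cp f i).eval ((z j + s) / z i))
      ((z i)^d * ((cp f i).derivative.eval (z j / z i) * (1 / z i))) 0 := by
    have hin : HasDerivAt (fun s : ℝ => (z j + s) / z i) (1 / z i) 0 := by
      simpa using ((hasDerivAt_id 0).const_add (z j)).div_const (z i)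
    have hcomp := (Polynomial.hasDerivAt (cp f i) ((z j + 0) / z i)).comp 0 hin
    simp only [add_zero] at hcomp
    exact hcomp.const_mul _
  rw [heq] at h1
  have := h1.unique h2
  rw [this]
  have hpow : (z i)^d = (z i)^(d-1) * z i := by
    rw [← pow_succ]; congr 1; omega
  rw [hpow]
  field_simp

lemma norm_le_coord {i j : Fin 2} (hij : i ≠ j) (z : E2) (hji : |z j| ≤ |z i|) :
    ‖z‖ ≤ 2 * |z i| := by
  have h1 : ‖z‖ = Real.sqrt (∑ k, z k ^ 2) := by
    rw [EuclideanSpace.norm_eq]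
    congr 1
    apply Finset.sum_congr rfl
    intro k _
    rw [Real.norm_eq_abs, sq_abs]
  have huniv : (Finset.univ : Finset (Fin 2)) = {i, j} := by
    symm; apply Finset.eq_univ_iff_forall.mpr; intro k
    simp only [Finset.mem_insert, Finset.mem_singleton]; omega
  have h2 : ∑ k, z k ^ 2 = z i ^ 2 + z j ^ 2 := by
    rw [huniv, Finset.sum_insert (by simp [hij]), Finset.sum_singleton]
  have h3 : z i ^ 2 + z j ^ 2 ≤ (2 * |z i|) ^ 2 := by
    have := sq_le_sq' (neg_abs_le (z j)) (le_abs_self (z j))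
    have h4 : z j ^ 2 ≤ z i ^ 2 := by
      have := pow_le_pow_left₀ (abs_nonneg (z j)) hji 2
      simpa [sq_abs] using this
    have h5 : (0:ℝ) ≤ z i ^ 2 := sq_nonneg _
    nlinarith [sq_abs (z i)]
  rw [h1, h2]
  calc Real.sqrt (z i ^ 2 + z j ^ 2) ≤ Real.sqrt ((2 * |z i|)^2) := Real.sqrt_le_sqrt h3
    _ = 2 * |z i| := Real.sqrt_sq (by positivity)

lemma chart_bound (hhom : f.IsHomogeneous d) (hd : 1 ≤ d) {i j : Fin 2} (hij : i ≠ j)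
    {z : E2} (hzi : z i ≠ 0) (hji : |z j| ≤ |z i|) :
    |z i|^(d-1) * max |(cp f i).eval (z j / z i)| |(cp f i).derivative.eval (z j / z i)| / 2
      ≤ ‖fderiv ℝ (F f) z‖ := by
  set t := z j / z i with ht
  set L := fderiv ℝ (F f) z with hL
  have hz0 : z ≠ 0 := by
    intro h
    rw [h] at hzi
    exact hzi rfl
  have hnz : 0 < ‖z‖ := norm_pos_iff.mpr hz0
  -- tangential bound
  have htan : |z i|^(d-1) * |(cp f i).derivative.eval t| ≤ ‖L‖ := by
    have h1 : |L (EuclideanSpace.single j 1)| ≤ ‖L‖ * ‖EuclideanSpace.single j (1:ℝ)‖ :=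
      L.le_opNorm _
    rw [EuclideanSpace.norm_single] at h1
    simp only [norm_one, mul_one] at h1
    rw [hL, fderiv_chart hhom hd hij hzi, abs_mul, abs_pow] at h1
    exact h1
  -- Euler bound
  have heul : |z i|^(d-1) * |(cp f i).eval t| ≤ 2 * ‖L‖ := by
    have h1 : |L z| ≤ ‖L‖ * ‖z‖ := L.le_opNorm _
    rw [hL, euler hhom, F_chart hhom hij hzi] at h1
    have h2 : |(d:ℝ) * ((z i)^d * (cp f i).eval t)| = d * (|z i|^d * |(cp f i).eval t|) := by
      rw [abs_mul, abs_mul, abs_pow, Nat.abs_cast]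
    rw [h2] at h1
    have h3 : ‖z‖ ≤ 2 * |z i| := norm_le_coord hij z hji
    have hd1 : (1:ℝ) ≤ d := by exact_mod_cast hd
    have h4 : |z i|^d = |z i|^(d-1) * |z i| := by rw [← pow_succ]; congr 1; omega
    have h5 : (d:ℝ) * (|z i|^d * |(cp f i).eval t|) ≤ ‖L‖ * (2 * |z i|) :=
      le_trans h1 (mul_le_mul_of_nonneg_left h3 (norm_nonneg _))
    rw [h4] at h5
    have hzi0 : 0 < |z i| := abs_pos.mpr hzi
    have hX : 0 ≤ |z i|^(d-1) * |z i| * |(cp f i).eval t| := by positivity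
    have h7 : |z i|^(d-1) * |z i| * |(cp f i).eval t|
        ≤ (d:ℝ) * (|z i|^(d-1) * |z i| * |(cp f i).eval t|) := le_mul_of_one_le_left hX hd1
    have h6 : |z i|^(d-1) * |(cp f i).eval t| * |z i| ≤ 2 * ‖L‖ * |z i| := by linarith
    exact le_of_mul_le_mul_right h6 hzi0
  rcases le_total |(cp f i).eval t| |(cp f i).derivative.eval t| with hmax | hmax
  · rw [max_eq_right hmax]
    linarith [htan, mul_nonneg (pow_nonneg (abs_nonneg (z i)) (d-1))
      (abs_nonneg ((cp f i).derivative.eval t))]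
  · rw [max_eq_left hmax]
    linarith [heul]

variable {f : MvPolynomial (Fin 2) ℝ} {d : ℕ}

lemma alpha_nonneg (hd : 1 ≤ d) : (0:ℝ) ≤ 1 - 1/(d:ℝ) := by
  have h1 : (1:ℝ) ≤ (d:ℝ) := by exact_mod_cast hd
  have : 1/(d:ℝ) ≤ 1 := by rw [div_le_one (by linarith)]; linarith
  linarith

lemma pow_rpow_exp {x : ℝ} (hx : 0 ≤ x) {d : ℕ} (hd : 1 ≤ d) :
    ((x^d : ℝ)) ^ (1 - 1/(d:ℝ)) = x^(d-1) := by
  have hd0 : (d:ℝ) ≠ 0 := by positivity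
  rw [← Real.rpow_natCast x d, ← Real.rpow_mul hx]
  have : (d:ℝ) * (1 - 1/(d:ℝ)) = ((d-1 : ℕ) : ℝ) := by
    rw [Nat.cast_sub hd]
    field_simp
    norm_num
  rw [this, Real.rpow_natCast]

lemma F_zero (hhom : f.IsHomogeneous d) (hd : 1 ≤ d) : F f 0 = 0 := by
  have h := F_smul hhom 0 0
  rw [smul_zero] at h
  rw [h, zero_pow (by omega), zero_mul]

lemma ezero : ∀ z : E2, z 0 = 0 → z 1 = 0 → z = 0 := by
  intro z h0 h1
  ext k
  have hk : k = 0 ∨ k = 1 := by omega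
  rcases hk with rfl | rfl
  · exact h0
  · exact h1

lemma GG (hhom : f.IsHomogeneous d) (hd : 1 ≤ d) (hf : f ≠ 0) :
    ∃ c > 0, ∀ z : E2, c * ‖F f z‖ ^ (1 - 1/(d:ℝ)) ≤ ‖fderiv ℝ (F f) z‖ := by
  obtain ⟨c₀, hc₀, hk₀⟩ := key d hd (cp f 0) (cp_ne_zero hf hhom (show (0:Fin 2) ≠ 1 by omega))
    (cp_natDegree hhom 0)
  obtain ⟨c₁, hc₁, hk₁⟩ := key d hd (cp f 1) (cp_ne_zero hf hhom (show (1:Fin 2) ≠ 0 by omega))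
    (cp_natDegree hhom 1)
  set α := 1 - 1/(d:ℝ) with hα
  refine ⟨min c₀ c₁ / 2, by positivity, ?_⟩
  have hmain : ∀ z : E2, z ≠ 0 → min c₀ c₁ / 2 * ‖F f z‖ ^ α ≤ ‖fderiv ℝ (F f) z‖ := by
    intro z hz
    have hgen : ∀ i j : Fin 2, i ≠ j → z i ≠ 0 → |z j| ≤ |z i| →
        (∀ cc : ℝ, 0 < cc → min c₀ c₁ ≤ cc →
        (∀ t ∈ Set.Icc (-1:ℝ) 1,
          cc * |(cp f i).eval t| ^ α ≤ max |(cp f i).eval t| |(cp f i).derivative.eval t|) →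
        min c₀ c₁ / 2 * ‖F f z‖ ^ α ≤ ‖fderiv ℝ (F f) z‖) := by
      intro i j hij hzi hji cc hcc hmin hkey
      set t := z j / z i with ht
      have htI : t ∈ Set.Icc (-1:ℝ) 1 := by
        rw [Set.mem_Icc, ← abs_le, ht, abs_div]
        rw [div_le_one (abs_pos.mpr hzi)]
        exact hji
      have hFz : ‖F f z‖ = |z i|^d * |(cp f i).eval t| := by
        rw [Real.norm_eq_abs, F_chart hhom hij hzi, abs_mul, abs_pow]
      have hFzα : ‖F f z‖ ^ α = |z i|^(d-1) * |(cp f i).eval t| ^ α := by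
        rw [hFz, Real.mul_rpow (by positivity) (abs_nonneg _), pow_rpow_exp (abs_nonneg _) hd]
      have hkt := hkey t htI
      have hcb := chart_bound hhom hd hij hzi hji
      calc min c₀ c₁ / 2 * ‖F f z‖ ^ α
          = |z i|^(d-1) * (min c₀ c₁ * |(cp f i).eval t| ^ α) / 2 := by
            rw [hFzα]; ring
        _ ≤ |z i|^(d-1) * (cc * |(cp f i).eval t| ^ α) / 2 := by
            apply div_le_div_of_nonneg_right ?_ (by norm_num : (0:ℝ) ≤ 2)
            apply mul_le_mul_of_nonneg_left _ (by positivity)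
            exact mul_le_mul_of_nonneg_right hmin (Real.rpow_nonneg (abs_nonneg _) _)
        _ ≤ |z i|^(d-1) * max |(cp f i).eval t| |(cp f i).derivative.eval t| / 2 := by
            apply div_le_div_of_nonneg_right ?_ (by norm_num : (0:ℝ) ≤ 2)
            exact mul_le_mul_of_nonneg_left hkt (by positivity)
        _ ≤ ‖fderiv ℝ (F f) z‖ := hcb
    rcases le_total |z 1| |z 0| with hc | hc
    · have hz0 : z 0 ≠ 0 := by
        intro h
        apply hz
        apply ezero z h
        rw [h] at hc
        simpa using hc
      exact hgen 0 1 (by omega) hz0 hc c₀ hc₀ (min_le_left _ _) hk₀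
    · have hz1 : z 1 ≠ 0 := by
        intro h
        apply hz
        refine ezero z ?_ h
        rw [h] at hc
        simpa using hc
      exact hgen 1 0 (by omega) hz1 hc c₁ hc₁ (min_le_right _ _) hk₁
  intro z
  rcases eq_or_ne z 0 with rfl | hz
  · rcases Nat.lt_or_ge d 2 with hd2 | hd2
    · -- d = 1
      have hd1 : d = 1 := by omega
      have hα0 : α = 0 := by rw [hα, hd1]; norm_num
      rw [hα0, Real.rpow_zero, mul_one]
      -- use continuity of fderiv
      set z₀ : E2 := EuclideanSpace.single 0 1 with hz₀
      have hz₀ne : z₀ ≠ 0 := by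
        intro h
        have : (z₀ : E2) 0 = 0 := by rw [h]; rfl
        rw [hz₀, EuclideanSpace.single_apply] at this
        simp at this
      have hfd : ∀ t : ℝ, t ≠ 0 → fderiv ℝ (F f) (t • z₀) = fderiv ℝ (F f) z₀ := by
        intro t ht
        rw [fderiv_smul hhom hd ht z₀, hd1]
        simp
      have hcont : Continuous (fderiv ℝ (F f)) := (contDiffF f).continuous_fderiv (by simp)
      have h1 : Filter.Tendsto (fun t : ℝ => fderiv ℝ (F f) (t • z₀)) (nhdsWithin 0 {0}ᶜ)
          (nhds (fderiv ℝ (F f) 0)) := by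
        have hc2 : Continuous fun t : ℝ => fderiv ℝ (F f) (t • z₀) :=
          hcont.comp (continuous_id.smul continuous_const)
        have := hc2.tendsto 0
        rw [zero_smul] at this
        exact this.mono_left nhdsWithin_le_nhds
      have h2 : Filter.Tendsto (fun t : ℝ => fderiv ℝ (F f) (t • z₀)) (nhdsWithin 0 {0}ᶜ)
          (nhds (fderiv ℝ (F f) z₀)) := by
        apply Filter.Tendsto.congr' _ tendsto_const_nhds
        filter_upwards [self_mem_nhdsWithin] with t ht
        exact (hfd t ht).symm
      have heq0 : fderiv ℝ (F f) 0 = fderiv ℝ (F f) z₀ := tendsto_nhds_unique h1 h2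
      have := hmain z₀ hz₀ne
      rw [hα0, Real.rpow_zero, mul_one] at this
      rw [heq0]
      exact this
    · -- d ≥ 2
      have hα0 : 0 < α := by
        rw [hα]
        have h2 : (2:ℝ) ≤ (d:ℝ) := by exact_mod_cast hd2
        have : 1/(d:ℝ) ≤ 1/2 := by
          apply one_div_le_one_div_of_le <;> linarith
        linarith
      rw [F_zero hhom hd, norm_zero, Real.zero_rpow (ne_of_gt hα0), mul_zero]
      exact norm_nonneg _
  · exact hmain z hz

end Stmt11

open Stmt11

/-- a nonzero real homogeneous polynomial of degree `d ≥ 1` in two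
variables has Łojasiewicz gradient exponent `1 - 1/d` at the origin. -/
theorem stmt11 (d : ℕ) (hd : 1 ≤ d) (f : MvPolynomial (Fin 2) ℝ) (hf : f ≠ 0)
    (hhom : f.IsHomogeneous d) :
    LGE (fun z : EuclideanSpace ℝ (Fin 2) => MvPolynomial.eval (fun i => z i) f) =
      1 - 1 / (d : ℝ) := by
  have hd1 : (1:ℝ) ≤ (d:ℝ) := by exact_mod_cast hd
  have hd0 : (0:ℝ) < (d:ℝ) := by linarith
  set α := 1 - 1/(d:ℝ) with hα
  have hα0 : 0 ≤ α := alpha_nonneg hd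
  show sInf {l : ℝ | 0 < l ∧ ∃ c > (0:ℝ), ∃ ε > (0:ℝ), ∀ z : E2, ‖z‖ < ε →
    c * ‖F f z‖ ^ l ≤ ‖fderiv ℝ (F f) z‖} = α
  set S := {l : ℝ | 0 < l ∧ ∃ c > (0:ℝ), ∃ ε > (0:ℝ), ∀ z : E2, ‖z‖ < ε →
    c * ‖F f z‖ ^ l ≤ ‖fderiv ℝ (F f) z‖} with hS
  -- a point where f does not vanish
  obtain ⟨x₀, hx₀⟩ : ∃ x : Fin 2 → ℝ, MvPolynomial.eval x f ≠ 0 := by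
    by_contra h
    push_neg at h
    apply hf
    apply MvPolynomial.funext
    intro x
    rw [h x, map_zero]
  set z₀ : E2 := (WithLp.equiv 2 (Fin 2 → ℝ)).symm x₀ with hz₀
  have hFz₀ : F f z₀ ≠ 0 := hx₀
  have hz₀norm : 0 < ‖z₀‖ := by
    rw [norm_pos_iff]
    intro h
    apply hFz₀
    rw [h, F_zero hhom hd]
  -- Claim B : every l > α is in S
  have claimB : ∀ l : ℝ, α < l → l ∈ S := by
    intro l hl
    obtain ⟨c, hc, hGG⟩ := GG hhom hd hf
    have hFcont : Continuous (F f) := (contDiffF f).continuous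
    have hc0 := hFcont.continuousAt (x := 0)
    rw [Metric.continuousAt_iff] at hc0
    obtain ⟨ε, hε, hεb⟩ := hc0 1 one_pos
    refine ⟨lt_of_le_of_lt hα0 hl, c, hc, ε, hε, ?_⟩
    intro z hz
    have h1 : |F f z| ≤ 1 := by
      have := hεb (x := z) (by rwa [dist_zero_right])
      rw [F_zero hhom hd, dist_zero_right, Real.norm_eq_abs] at this
      exact le_of_lt this
    calc c * ‖F f z‖ ^ l ≤ c * ‖F f z‖ ^ α := by
          apply mul_le_mul_of_nonneg_left _ (le_of_lt hc)
          exact rpow_le_rpow_exp (norm_nonneg _) (by rwa [Real.norm_eq_abs]) hα0 (le_of_lt hl)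
      _ ≤ ‖fderiv ℝ (F f) z‖ := hGG z
  -- Claim A : every l in S is ≥ α
  have claimA : ∀ l ∈ S, α ≤ l := by
    rintro l ⟨hl0, c, hc, ε, hε, H⟩
    by_contra hlt
    push_neg at hlt
    set β := ((d:ℝ) - 1) - d * l with hβ
    have hβ0 : 0 < β := by
      rw [hβ]
      have : d * l < (d:ℝ) * α := by
        apply mul_lt_mul_of_pos_left hlt hd0
      rw [hα] at this
      have h2 : (d:ℝ) * (1 - 1/(d:ℝ)) = (d:ℝ) - 1 := by field_simp
      linarith [h2 ▸ this]
    set K := ‖fderiv ℝ (F f) z₀‖ with hK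
    have hK0 : 0 ≤ K := norm_nonneg _
    set a := c * |F f z₀| ^ l with ha
    have ha0 : 0 < a := by
      apply mul_pos hc
      exact Real.rpow_pos_of_pos (abs_pos.mpr hFz₀) _
    -- the scaled inequality
    have hscale : ∀ t : ℝ, 0 < t → t * ‖z₀‖ < ε → a ≤ K * t ^ β := by
      intro t ht htε
      have hnorm : ‖t • z₀‖ < ε := by
        rw [norm_smul, Real.norm_eq_abs, abs_of_pos ht]
        exact htε
      have := H (t • z₀) hnorm
      rw [F_smul hhom t z₀, fderiv_smul hhom hd (ne_of_gt ht) z₀, norm_smul] at this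
      rw [Real.norm_eq_abs, Real.norm_eq_abs, abs_mul, abs_pow, abs_of_pos ht,
        abs_of_pos (pow_pos ht (d-1)), ← hK] at this
      have h2 : (t ^ d * |F f z₀|) ^ l = t ^ ((d:ℝ) * l) * |F f z₀| ^ l := by
        rw [Real.mul_rpow (by positivity) (abs_nonneg _), ← Real.rpow_natCast t d,
          ← Real.rpow_mul (le_of_lt ht)]
      rw [h2] at this
      have h3 : c * (t ^ ((d:ℝ) * l) * |F f z₀| ^ l) = a * t ^ ((d:ℝ) * l) := by
        rw [ha]; ring
      rw [h3] at this
      have h4 : (t:ℝ) ^ (d-1 : ℕ) = t ^ (((d:ℝ) - 1)) := by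
        rw [← Real.rpow_natCast t (d-1)]
        congr 1
        push_cast [Nat.cast_sub hd]
        ring
      rw [h4] at this
      have h5 : t ^ (((d:ℝ) - 1)) = t ^ ((d:ℝ) * l) * t ^ β := by
        rw [← Real.rpow_add ht, hβ]
        congr 1
        ring
      rw [h5] at this
      have h6 : 0 < t ^ ((d:ℝ) * l) := Real.rpow_pos_of_pos ht _
      calc a = a * t ^ ((d:ℝ) * l) / t ^ ((d:ℝ) * l) := by field_simp
        _ ≤ t ^ ((d:ℝ) * l) * t ^ β * K / t ^ ((d:ℝ) * l) := by
            apply div_le_div_of_nonneg_right _ (le_of_lt h6)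
            linarith [this]
        _ = K * t ^ β := by field_simp
    -- choose t small
    set t := min (ε / (2 * ‖z₀‖)) ((a / (2 * (K+1))) ^ β⁻¹) with htdef
    have htpos : 0 < t := by
      apply lt_min (by positivity)
      apply Real.rpow_pos_of_pos (by positivity)
    have htε : t * ‖z₀‖ < ε := by
      have h1 : t ≤ ε / (2 * ‖z₀‖) := min_le_left _ _
      calc t * ‖z₀‖ ≤ ε / (2 * ‖z₀‖) * ‖z₀‖ :=
            mul_le_mul_of_nonneg_right h1 (le_of_lt hz₀norm)
        _ = ε / 2 := by field_simp
        _ < ε := by linarith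
    have h7 := hscale t htpos htε
    have h8 : t ^ β ≤ a / (2 * (K+1)) := by
      have h9 : t ≤ (a / (2 * (K+1))) ^ β⁻¹ := min_le_right _ _
      calc t ^ β ≤ ((a / (2 * (K+1))) ^ β⁻¹) ^ β :=
            Real.rpow_le_rpow (le_of_lt htpos) h9 (le_of_lt hβ0)
        _ = a / (2 * (K+1)) := Real.rpow_inv_rpow (by positivity) (ne_of_gt hβ0)
    have h10 : K * t ^ β ≤ K * (a / (2 * (K+1))) :=
      mul_le_mul_of_nonneg_left h8 hK0
    have h11 : K * (a / (2 * (K+1))) < a := by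
      rw [← mul_div_assoc, div_lt_iff₀ (by positivity)]
      nlinarith [mul_nonneg hK0 (le_of_lt ha0)]
    linarith
  -- conclude
  have hSne : S.Nonempty := ⟨α + 1, claimB _ (by linarith)⟩
  have hSbdd : BddBelow S := ⟨0, fun l hl => le_of_lt hl.1⟩
  apply le_antisymm
  · apply le_of_forall_pos_le_add
    intro η hη
    exact csInf_le_of_le hSbdd (claimB (α + η) (by linarith)) le_rfl
  · exact le_csInf hSne claimA
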